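/- The column space (range) of the matrix M = Q g Q equals the null space of J; that is, Range(Q g Q) = Null(J). -/

import Mathlib

open Matrix

/-- The column space (range) of `M = Q g Q` equals the null space of `J`. -/
theorem range_QgQ_eq_null_J {n m : ℕ} (hm : 0 < m) (hmn : m < n)
    (J : Matrix (Fin m) (Fin n) ℝ) (hJ : J.rank = m)
    (g : Matrix (Fin n) (Fin n) ℝ) (hg : g.PosDef)
    (hJJ : IsUnit (J * Jᵀ).det)
    (Q : Matrix (Fin n) (Fin n) ℝ)
    (hQ : Q = 1 - Jᵀ * (J * Jᵀ)⁻¹ * J) :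
    LinearMap.range (Q * g * Q).mulVecLin = LinearMap.ker J.mulVecLin := by
  have h1 : J * Jᵀ * (J * Jᵀ)⁻¹ = 1 := Matrix.mul_nonsing_inv _ hJJ
  have hJQ : J * Q = 0 := by
    rw [hQ, Matrix.mul_sub, Matrix.mul_one, ← Matrix.mul_assoc, ← Matrix.mul_assoc, h1,
      Matrix.one_mul, sub_self]
  have hQT : Qᵀ = Q := by
    rw [hQ]
    simp [Matrix.transpose_sub, Matrix.transpose_mul, Matrix.transpose_nonsing_inv,
      Matrix.transpose_transpose, Matrix.mul_assoc]
  have hQJT : Q * Jᵀ = 0 := by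
    have := congrArg Matrix.transpose hJQ
    simpa [Matrix.transpose_mul, hQT] using this
  have hJM : J * (Q * g * Q) = 0 := by
    rw [← Matrix.mul_assoc, ← Matrix.mul_assoc, hJQ, Matrix.zero_mul, Matrix.zero_mul]
  have hQv : ∀ v : Fin n → ℝ, J *ᵥ v = 0 → Q *ᵥ v = v := by
    intro v hv
    rw [hQ, Matrix.sub_mulVec, Matrix.one_mulVec, ← Matrix.mulVec_mulVec, hv,
      Matrix.mulVec_zero, sub_zero]
  -- range ⊆ ker
  have hle : LinearMap.range (Q * g * Q).mulVecLin ≤ LinearMap.ker J.mulVecLin := by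
    rintro x ⟨v, rfl⟩
    simp only [LinearMap.mem_ker, Matrix.mulVecLin_apply, Matrix.mulVec_mulVec, hJM,
      Matrix.zero_mulVec]
  -- the restriction of M to ker J
  set K := LinearMap.ker J.mulVecLin with hK
  have hmaps : ∀ v ∈ K, (Q * g * Q).mulVecLin v ∈ K := fun v _ =>
    hle (LinearMap.mem_range_self _ v)
  let f : K →ₗ[ℝ] K := LinearMap.restrict (Q * g * Q).mulVecLin hmaps
  have hinj : Function.Injective f := by
    rw [← LinearMap.ker_eq_bot, LinearMap.ker_eq_bot']
    rintro ⟨v, hv⟩ hfv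
    have hv' : J *ᵥ v = 0 := hv
    have hMv : (Q * g * Q) *ᵥ v = 0 := congrArg Subtype.val hfv
    have hdot : v ⬝ᵥ ((Q * g * Q) *ᵥ v) = 0 := by rw [hMv, dotProduct_zero]
    have hexp : v ⬝ᵥ ((Q * g * Q) *ᵥ v) = v ⬝ᵥ (g *ᵥ v) := by
      have h2 : (Q * g * Q) *ᵥ v = Q *ᵥ (g *ᵥ v) := by
        rw [← Matrix.mulVec_mulVec, hQv v hv', ← Matrix.mulVec_mulVec]
      rw [h2, Matrix.dotProduct_mulVec, ← Matrix.mulVec_transpose, hQT, hQv v hv']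
    have hvz : v = 0 := by
      by_contra hne
      have := hg.dotProduct_mulVec_pos hne
      simp only [RCLike.star_def, star_trivial] at this
      rw [hexp] at hdot
      simp [dotProduct, Matrix.mulVec] at hdot this
      linarith
    exact Subtype.ext hvz
  have hsurj : Function.Surjective f := by
    have : FiniteDimensional ℝ K := inferInstance
    exact (LinearMap.injective_iff_surjective).mp hinj
  refine le_antisymm hle ?_
  intro v hv
  obtain ⟨w, hw⟩ := hsurj ⟨v, hv⟩
  exact ⟨w.1, congrArg Subtype.val hw⟩
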